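/- For all integers m, l ≥ 1, Σ_{n=1}^∞ H_n^{(2)} / ((n+m)·C(n+m+l, l)) = π² / (6·m·C(m+l−1, l−1)) − Σ_{j=0}^{l−1} (−1)^j · C(l−1, j) · H_{m+j} / (m+j)². -/

import Mathlib

open Finset Real Filter

/-- The generalized harmonic number `H_n^{(p)} = ∑_{k=1}^n 1/k^p`. -/
noncomputable def gH (p : ℤ) (n : ℕ) : ℝ := ∑ k ∈ Finset.Icc 1 n, ((k : ℝ) ^ p)⁻¹

/-- The generalized hyperharmonic number `H_n^{(p,q)}`:
`H_n^{(p,0)} = 1/n^p` (with `H_0^{(p,q)} = 0`) and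
`H_n^{(p,q)} = ∑_{k=1}^n H_k^{(p,q-1)}` for `q ≥ 1`. -/
noncomputable def gHH (p : ℤ) : ℕ → ℕ → ℝ
  | 0, n => if n = 0 then 0 else ((n : ℝ) ^ p)⁻¹
  | q + 1, n => ∑ k ∈ Finset.Icc 1 n, gHH p q k

/-- Euler sum of generalized harmonic numbers `ζ_{H^{(p)}}(r) = ∑_{n≥1} H_n^{(p)}/n^r`. -/
noncomputable def eulerSum (p r : ℤ) : ℝ := ∑' n : ℕ+, gH p n / (n : ℝ) ^ r

/-- Euler sum of generalized hyperharmonic numbers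
`ζ_{H^{(p,q)}}(r) = ∑_{n≥1} H_n^{(p,q)}/n^r`. -/
noncomputable def eulerSumHH (p : ℤ) (q : ℕ) (r : ℤ) : ℝ := ∑' n : ℕ+, gHH p q n / (n : ℝ) ^ r

/-- Riemann zeta value at an integer argument, `ζ(s) = ∑_{n≥1} 1/n^s`. -/
noncomputable def zv (s : ℤ) : ℝ := ∑' n : ℕ+, ((n : ℝ) ^ s)⁻¹

/-- Unsigned Stirling numbers of the first kind, defined by
`x(x+1)⋯(x+q-1) = ∑_{k=0}^q [q,k] x^k`, i.e. `[n+1,k] = [n,k-1] + n·[n,k]`. -/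
def stirlingFirst : ℕ → ℕ → ℕ
  | 0, 0 => 1
  | 0, _ + 1 => 0
  | _ + 1, 0 => 0
  | n + 1, k + 1 => stirlingFirst n k + n * stirlingFirst n (k + 1)

/-- The series `μ(r,j) = ∑_{n≥1} 1/(n^r (n+j))`. -/
noncomputable def mu (r j : ℕ) : ℝ := ∑' n : ℕ+, 1 / ((n : ℝ) ^ r * ((n : ℝ) + j))

/-- `e_j(n+1, n+2, …, n+q)`: the `j`-th elementary symmetric polynomial
evaluated at the numbers `n+1, …, n+q`. -/
noncomputable def esymmVal (n q j : ℕ) : ℝ :=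
  ∑ s ∈ Finset.powersetCard j (Finset.Icc 1 q), ∏ i ∈ s, ((n : ℝ) + i)


private lemma hF2 (k : ℕ) : ((k:ℝ) ^ (2:ℤ))⁻¹ = 1 / (k:ℝ)^2 := by
  rw [show (2:ℤ) = ((2:ℕ):ℤ) from rfl, zpow_natCast, one_div]

private lemma summable_inv_sq : Summable (fun n : ℕ => 1/((n:ℝ)+1)^2) := by
  have h : Summable (fun n : ℕ => 1/(n:ℝ)^2) := summable_one_div_nat_pow.mpr one_lt_two
  have := (summable_nat_add_iff 1).mpr h
  simpa using this

private lemma summable_of_sq_bound (f : ℕ → ℝ) (C : ℝ) (h0 : ∀ n, 0 ≤ f n)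
    (hle : ∀ n, f n ≤ C / ((n:ℝ)+1)^2) : Summable f := by
  refine Summable.of_nonneg_of_le h0 hle ?_
  exact (summable_inv_sq.mul_left C).congr fun n => by rw [mul_one_div]

private lemma pi_sq_six_le : Real.pi^2/6 ≤ 3 := by
  nlinarith [Real.pi_le_four, Real.pi_pos]

private lemma tsum_inv_sq : ∑' n : ℕ, 1/((n:ℝ)+1)^2 = Real.pi^2/6 := by
  have h2 : HasSum (fun n : ℕ => 1/(n:ℝ)^2) (Real.pi^2/6 + ∑ i ∈ range 1, 1/(i:ℝ)^2) := by
    simpa using hasSum_zeta_two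
  have h4 := ((hasSum_nat_add_iff (f := fun n : ℕ => 1/(n:ℝ)^2) 1).mpr h2).tsum_eq
  calc ∑' n : ℕ, 1/((n:ℝ)+1)^2 = ∑' n : ℕ, 1/((((n+1):ℕ):ℝ))^2 :=
        tsum_congr fun n => by push_cast; ring
    _ = Real.pi^2/6 := h4

private lemma telescope_tsum (f : ℕ → ℝ) (h0 : Tendsto f atTop (nhds 0))
    (hs : Summable fun n => f n - f (n+1)) : ∑' n : ℕ, (f n - f (n+1)) = f 0 := by
  refine HasSum.tsum_eq ?_
  rw [hs.hasSum_iff_tendsto_nat]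
  simp only [Finset.sum_range_sub']
  simpa using tendsto_const_nhds.sub h0

private lemma prod_asc (M : ℕ) : ∀ K : ℕ, ∏ i ∈ range K, (M + 1 + i) = (M+1).ascFactorial K
  | 0 => by simp
  | (K+1) => by
      rw [prod_range_succ, prod_asc M K, Nat.ascFactorial_succ, Nat.mul_comm]

private lemma choose_prod (M L : ℕ) :
    (M + 1) * ((M + 1 + L).choose L) * (Nat.factorial L) = ∏ i ∈ range (L+1), (M + 1 + i) := by
  rw [Finset.prod_range_succ']
  have h1 : ∏ i ∈ range L, (M + 1 + (i+1)) = ∏ i ∈ range L, (M + 1 + 1 + i) :=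
    Finset.prod_congr rfl fun i _ => by omega
  rw [h1, prod_asc (M+1) L, Nat.ascFactorial_eq_factorial_mul_choose]
  ring

private lemma choose_prod_real (M L : ℕ) :
    ((M:ℝ) + 1) * (((M + 1 + L).choose L : ℕ) : ℝ) * ((Nat.factorial L) : ℝ)
      = ∏ i ∈ range (L+1), ((M:ℝ) + 1 + i) := by
  exact_mod_cast choose_prod M L

private lemma ratio_sub (L : ℕ) (x : ℝ) (hx : 0 < x) :
    ((Nat.factorial L) : ℝ) / ∏ i ∈ range (L+1), (x + i) - ((Nat.factorial L) : ℝ) / ∏ i ∈ range (L+1), (x + 1 + i)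
      = (Nat.factorial (L+1) : ℝ) / ∏ i ∈ range (L+2), (x + i) := by
  have hP : 0 < ∏ i ∈ range (L+1), (x + i) :=
    Finset.prod_pos fun i _ => by positivity
  have hQ : 0 < ∏ i ∈ range (L+1), (x + 1 + i) :=
    Finset.prod_pos fun i _ => by positivity
  have h3 : ∏ i ∈ range (L+2), (x + i)
      = (∏ i ∈ range (L+1), (x + i)) * (x + ((L+1:ℕ):ℝ)) :=
    Finset.prod_range_succ _ _
  have h4 : ∏ i ∈ range (L+2), (x + i) = x * ∏ i ∈ range (L+1), (x + 1 + i) := by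
    rw [Finset.prod_range_succ']
    have h5 : ∏ i ∈ range (L+1), (x + ((i+1:ℕ):ℝ)) = ∏ i ∈ range (L+1), (x + 1 + i) :=
      Finset.prod_congr rfl fun i _ => by push_cast; ring
    rw [h5]
    push_cast
    ring
  have e1 : ((Nat.factorial L) : ℝ) / ∏ i ∈ range (L+1), (x + i)
      = (((Nat.factorial L) : ℝ) * (x + ((L+1:ℕ):ℝ))) / ∏ i ∈ range (L+2), (x + i) := by
    rw [h3, mul_div_mul_right _ _ (by positivity : (x + ((L+1:ℕ):ℝ)) ≠ 0)]
  have e2 : ((Nat.factorial L) : ℝ) / ∏ i ∈ range (L+1), (x + 1 + i)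
      = (x * ((Nat.factorial L) : ℝ)) / ∏ i ∈ range (L+2), (x + i) := by
    rw [h4, mul_div_mul_left _ _ hx.ne']
  rw [e1, e2, div_sub_div_same]
  congr 1
  push_cast [Nat.factorial_succ]
  ring

private lemma pf_lemma : ∀ (L : ℕ) (x : ℝ), 0 < x →
    ∑ j ∈ range (L+1), (-1:ℝ)^j * (L.choose j : ℝ) / (x + j)
      = ((Nat.factorial L) : ℝ) / ∏ i ∈ range (L+1), (x + i) := by
  intro L
  induction L with
  | zero => intro x hx; simp
  | succ L ih =>
    intro x hx
    have hg : ∀ j ∈ range (L+1),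
        (fun j : ℕ => (-1:ℝ)^j * (((L+1).choose j : ℕ) : ℝ) / (x + j)) (j+1)
        = (-1:ℝ)^(j+1) * ((L.choose (j+1) : ℕ) : ℝ) / (x + ((j+1:ℕ):ℝ))
          - (-1:ℝ)^j * ((L.choose j : ℕ) : ℝ) / ((x+1) + j) := by
      intro j _
      simp only [Nat.choose_succ_succ]
      have h1 : x + ((j:ℝ)+1) ≠ 0 := by positivity
      have h2 : x + 1 + (j:ℝ) ≠ 0 := by positivity
      push_cast
      field_simp
      ring
    have key : ∑ j ∈ range (L+2), (-1:ℝ)^j * (((L+1).choose j : ℕ) : ℝ) / (x + j)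
        = (∑ j ∈ range (L+1), (-1:ℝ)^j * ((L.choose j : ℕ) : ℝ) / (x + j))
          - ∑ j ∈ range (L+1), (-1:ℝ)^j * ((L.choose j : ℕ) : ℝ) / ((x+1) + j) := by
      rw [Finset.sum_range_succ'
        (fun j : ℕ => (-1:ℝ)^j * (((L+1).choose j : ℕ) : ℝ) / (x + j)) (L+1)]
      rw [Finset.sum_congr rfl hg, Finset.sum_sub_distrib]
      have hg0 : ((-1:ℝ)^(0:ℕ) * (((L+1).choose 0 : ℕ) : ℝ) / (x + ((0:ℕ):ℝ)))
          = (fun j : ℕ => (-1:ℝ)^j * ((L.choose j : ℕ) : ℝ) / (x + j)) 0 := by norm_num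
      rw [hg0, sub_add_eq_add_sub]
      congr 1
      rw [← Finset.sum_range_succ'
        (fun j : ℕ => (-1:ℝ)^j * ((L.choose j : ℕ) : ℝ) / (x + j)) (L+1)]
      rw [Finset.sum_range_succ]
      simp [Nat.choose_succ_self]
    rw [key, ih x hx, ih (x+1) (by linarith), ratio_sub L x hx]


private lemma gH2_eq (n : ℕ) : gH 2 n = ∑ k ∈ Icc 1 n, 1/(k:ℝ)^2 :=
  Finset.sum_congr rfl fun k _ => hF2 k

private lemma gH1_eq (n : ℕ) : gH 1 n = ∑ k ∈ Icc 1 n, 1/(k:ℝ) :=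
  Finset.sum_congr rfl fun k _ => by rw [zpow_one, one_div]




private lemma summable_tel (i : ℕ) :
    Summable (fun n : ℕ => 1/((n:ℝ)+1+i) - 1/((n:ℝ)+2+i)) := by
  apply summable_of_sq_bound _ 1
  · intro n
    have h1 : (0:ℝ) < (n:ℝ)+1+i := by positivity
    have : 1/((n:ℝ)+2+i) ≤ 1/((n:ℝ)+1+i) := one_div_le_one_div_of_le h1 (by linarith)
    linarith
  · intro n
    have h1 : ((n:ℝ)+1+i) ≠ 0 := by positivity
    have h2 : ((n:ℝ)+2+i) ≠ 0 := by positivity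
    have key : 1/((n:ℝ)+1+i) - 1/((n:ℝ)+2+i) = 1/(((n:ℝ)+1+i)*((n:ℝ)+2+i)) := by
      field_simp
      ring
    rw [key]
    apply one_div_le_one_div_of_le (by positivity)
    have hn : (0:ℝ) ≤ (n:ℝ) := Nat.cast_nonneg n
    have hi : (0:ℝ) ≤ (i:ℝ) := Nat.cast_nonneg i
    nlinarith

private lemma tendsto_shift (i : ℕ) :
    Tendsto (fun n : ℕ => 1/((n:ℝ)+1+i)) atTop (nhds 0) := by
  apply squeeze_zero (fun n => by positivity) (fun n => ?_)
    tendsto_one_div_add_atTop_nhds_zero_nat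
  exact one_div_le_one_div_of_le (by positivity)
    (by linarith [Nat.cast_nonneg (α := ℝ) i])

private lemma tsum_tel (i : ℕ) :
    ∑' n : ℕ, (1/((n:ℝ)+1+i) - 1/((n:ℝ)+2+i)) = 1/(1+(i:ℝ)) := by
  have hs' : Summable (fun n : ℕ =>
      (fun n : ℕ => 1/((n:ℝ)+1+i)) n - (fun n : ℕ => 1/((n:ℝ)+1+i)) (n+1)) :=
    (summable_tel i).congr fun n => by push_cast; ring_nf
  calc ∑' n : ℕ, (1/((n:ℝ)+1+i) - 1/((n:ℝ)+2+i))
      = ∑' n : ℕ, ((fun n : ℕ => 1/((n:ℝ)+1+i)) n - (fun n : ℕ => 1/((n:ℝ)+1+i)) (n+1)) :=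
        tsum_congr fun n => by push_cast; ring_nf
    _ = 1/(((0:ℕ):ℝ)+1+i) := telescope_tsum _ (tendsto_shift i) hs'
    _ = 1/(1+(i:ℝ)) := by norm_num

private lemma summable_gap (a : ℕ) :
    Summable (fun n : ℕ => 1/(((n:ℝ)+1)*((n:ℝ)+1+a))) := by
  apply summable_of_sq_bound _ 1
  · intro n; positivity
  · intro n
    apply one_div_le_one_div_of_le (by positivity)
    have hn : (0:ℝ) ≤ (n:ℝ) := Nat.cast_nonneg n
    have ha : (0:ℝ) ≤ (a:ℝ) := Nat.cast_nonneg a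
    nlinarith

private lemma tsum_gap (a : ℕ) (ha : 1 ≤ a) :
    ∑' n : ℕ, 1/(((n:ℝ)+1)*((n:ℝ)+1+a)) = gH 1 a / a := by
  have hapos : (0:ℝ) < a := by exact_mod_cast ha
  have key : ∀ n : ℕ, 1/(((n:ℝ)+1)*((n:ℝ)+1+a))
      = ∑ i ∈ range a, ((1:ℝ)/a) * (1/((n:ℝ)+1+i) - 1/((n:ℝ)+2+i)) := by
    intro n
    rw [← Finset.mul_sum]
    have htel : ∑ i ∈ range a, ((1:ℝ)/((n:ℝ)+1+i) - 1/((n:ℝ)+2+i))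
        = 1/((n:ℝ)+1) - 1/((n:ℝ)+1+a) := by
      calc ∑ i ∈ range a, ((1:ℝ)/((n:ℝ)+1+i) - 1/((n:ℝ)+2+i))
          = ∑ i ∈ range a, ((fun i : ℕ => 1/((n:ℝ)+1+i)) i - (fun i : ℕ => 1/((n:ℝ)+1+i)) (i+1)) :=
            Finset.sum_congr rfl fun i _ => by push_cast; ring_nf
        _ = 1/((n:ℝ)+1+((0:ℕ):ℝ)) - 1/((n:ℝ)+1+(a:ℝ)) := Finset.sum_range_sub' _ a
        _ = 1/((n:ℝ)+1) - 1/((n:ℝ)+1+a) := by norm_num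
    rw [htel]
    have h1 : ((n:ℝ)+1) ≠ 0 := by positivity
    have h2 : ((n:ℝ)+1+a) ≠ 0 := by positivity
    field_simp
    ring
  rw [tsum_congr key, Summable.tsum_finsetSum (fun i _ => ((summable_tel i).mul_left _))]
  have h2 : ∀ i ∈ range a, (∑' n : ℕ, ((1:ℝ)/a) * (1/((n:ℝ)+1+i) - 1/((n:ℝ)+2+i)))
      = (1/(a:ℝ)) * (1/(1+(i:ℝ))) := by
    intro i _
    rw [tsum_mul_left, tsum_tel i]
  rw [Finset.sum_congr rfl h2, ← Finset.mul_sum, gH1_eq]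
  have hsum : ∑ i ∈ range a, 1/(1+(i:ℝ)) = ∑ k ∈ Icc 1 a, 1/(k:ℝ) := by
    have : Icc 1 a = Ico 1 (a+1) := by rw [Finset.Ico_add_one_right_eq_Icc]
    rw [this, Finset.sum_Ico_eq_sum_range]
    apply Finset.sum_congr (by norm_num)
    intro i _
    push_cast
    ring_nf
  rw [hsum]
  ring

private lemma summable_mu2a (a : ℕ) :
    Summable (fun n : ℕ => 1/(((n:ℝ)+1)^2*((n:ℝ)+1+a))) := by
  apply summable_of_sq_bound _ 1
  · intro n; positivity
  · intro n
    apply one_div_le_one_div_of_le (by positivity)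
    have hn : (0:ℝ) ≤ (n:ℝ) := Nat.cast_nonneg n
    have ha : (0:ℝ) ≤ (a:ℝ) := Nat.cast_nonneg a
    nlinarith [sq_nonneg ((n:ℝ)+1)]



private lemma mu2_eq (a : ℕ) (ha : 1 ≤ a) :
    ∑' n : ℕ, 1/(((n:ℝ)+1)^2*((n:ℝ)+1+a))
      = (Real.pi^2/6)/a - gH 1 a/(a:ℝ)^2 := by
  have hapos : (0:ℝ) < a := by exact_mod_cast ha
  have key : ∀ n : ℕ, 1/(((n:ℝ)+1)^2*((n:ℝ)+1+a))
      = (1/a) * (1/((n:ℝ)+1)^2) - (1/a) * (1/(((n:ℝ)+1)*((n:ℝ)+1+a))) := by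
    intro n
    have h1 : ((n:ℝ)+1) ≠ 0 := by positivity
    have h2 : ((n:ℝ)+1+a) ≠ 0 := by positivity
    field_simp
    ring
  rw [tsum_congr key, Summable.tsum_sub (summable_inv_sq.mul_left _) ((summable_gap a).mul_left _),
      tsum_mul_left, tsum_mul_left, tsum_inv_sq, tsum_gap a ha]
  field_simp

private lemma gH2_nonneg (k : ℕ) : 0 ≤ gH 2 k := by
  rw [gH2_eq]
  exact Finset.sum_nonneg fun i _ => by positivity

private lemma gH2_le (k : ℕ) : gH 2 k ≤ 3 := by
  rw [gH2_eq]
  have hsum : Summable (fun k : ℕ => 1/(k:ℝ)^2) := summable_one_div_nat_pow.mpr one_lt_two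
  calc ∑ k ∈ Icc 1 k, 1/(k:ℝ)^2 ≤ ∑' k : ℕ, 1/(k:ℝ)^2 :=
        Summable.sum_le_tsum _ (fun i _ => by positivity) hsum
    _ = Real.pi^2/6 := hasSum_zeta_two.tsum_eq
    _ ≤ 3 := pi_sq_six_le

private lemma gH2_succ (n : ℕ) : gH 2 (n+1) = gH 2 n + 1/((n:ℝ)+1)^2 := by
  rw [gH2_eq, gH2_eq, Finset.sum_Icc_succ_top (Nat.succ_le_succ (Nat.zero_le n))]
  push_cast
  ring

private noncomputable def cF (M L n : ℕ) : ℝ :=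
  (Nat.factorial L : ℝ) / ∏ i ∈ Finset.range (L+1), ((n:ℝ) + M + 2 + i)

private noncomputable def bF (M L n : ℕ) : ℝ :=
  (Nat.factorial (L+1) : ℝ) / ∏ i ∈ Finset.range (L+2), ((n:ℝ) + M + 2 + i)

private lemma prodF_pos (M n K : ℕ) : (0:ℝ) < ∏ i ∈ range K, ((n:ℝ) + M + 2 + i) :=
  Finset.prod_pos fun i _ => by positivity

private lemma cF_sub (M L n : ℕ) : cF M L n - cF M L (n+1) = bF M L n := by
  have h := ratio_sub L ((n:ℝ) + M + 2) (by positivity)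
  unfold cF bF
  have e2 : ∏ i ∈ range (L+1), ((((n+1):ℕ):ℝ) + M + 2 + i)
      = ∏ i ∈ range (L+1), ((n:ℝ) + M + 2 + 1 + i) :=
    Finset.prod_congr rfl fun i _ => by push_cast; ring
  rw [e2]
  exact h

private lemma one_le_factor (M n i : ℕ) : (1:ℝ) ≤ (n:ℝ) + M + 2 + i := by
  have h1 := Nat.cast_nonneg (α := ℝ) n
  have h2 := Nat.cast_nonneg (α := ℝ) M
  have h3 := Nat.cast_nonneg (α := ℝ) i
  linarith

private lemma prod_ge_one (M n : ℕ) : ∀ K : ℕ, (1:ℝ) ≤ ∏ i ∈ range K, ((n:ℝ) + M + 2 + i)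
  | 0 => by simp
  | (K+1) => by
      rw [prod_range_succ]
      have h1 := prod_ge_one M n K
      have h2 := one_le_factor M n K
      nlinarith

private lemma prod_ge_lin (M L n : ℕ) : (n:ℝ)+1 ≤ ∏ i ∈ range (L+1), ((n:ℝ) + M + 2 + i) := by
  induction L with
  | zero =>
      rw [prod_range_one]
      have := Nat.cast_nonneg (α := ℝ) M
      push_cast
      linarith
  | succ L ih =>
      rw [prod_range_succ]
      have h2 := one_le_factor M n (L+1)
      have h3 := prodF_pos M n (L+1)
      nlinarith

private lemma cF_nonneg (M L n : ℕ) : 0 ≤ cF M L n :=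
  div_nonneg (Nat.cast_nonneg _) (prodF_pos M n (L+1)).le

private lemma bF_nonneg (M L n : ℕ) : 0 ≤ bF M L n :=
  div_nonneg (Nat.cast_nonneg _) (prodF_pos M n (L+2)).le

private lemma cF_le_fact (M L n : ℕ) : cF M L n ≤ (Nat.factorial L : ℝ) := by
  unfold cF
  exact div_le_self (Nat.cast_nonneg _) (prod_ge_one M n (L+1))

private lemma cF_le (M L n : ℕ) : cF M L n ≤ (Nat.factorial L : ℝ) / ((n:ℝ)+1) := by
  unfold cF
  rw [div_eq_mul_one_div, div_eq_mul_one_div ((Nat.factorial L : ℝ))]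
  refine mul_le_mul_of_nonneg_left ?_ (Nat.cast_nonneg _)
  exact one_div_le_one_div_of_le (by positivity) (prod_ge_lin M L n)

private lemma prod_ge_sq (M L n : ℕ) :
    ((n:ℝ)+1)^2 ≤ ∏ i ∈ range (L+2), ((n:ℝ) + M + 2 + i) := by
  induction L with
  | zero =>
      rw [prod_range_succ, prod_range_one]
      have := Nat.cast_nonneg (α := ℝ) M
      have := Nat.cast_nonneg (α := ℝ) n
      push_cast
      nlinarith
  | succ L ih =>
      rw [prod_range_succ]
      have h2 := one_le_factor M n (L+2)
      have h3 := prodF_pos M n (L+2)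
      rw [prod_range_succ] at ih ⊢
      nlinarith [sq_nonneg ((n:ℝ)+1)]

private lemma bF_le (M L n : ℕ) : bF M L n ≤ (Nat.factorial (L+1) : ℝ) / ((n:ℝ)+1)^2 := by
  unfold bF
  rw [div_eq_mul_one_div, div_eq_mul_one_div ((Nat.factorial (L+1) : ℝ))]
  exact mul_le_mul_of_nonneg_left
    (one_div_le_one_div_of_le (by positivity) (prod_ge_sq M L n)) (Nat.cast_nonneg _)

/-- The case `p = 2`. -/
theorem stmt_11 (m l : ℕ) (hm : 1 ≤ m) (hl : 1 ≤ l) :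
    ∑' n : ℕ+, gH 2 n / (((n : ℝ) + m) * ((((n : ℕ) + m + l).choose l : ℕ) : ℝ))
      = Real.pi ^ 2 / (6 * (m : ℝ) * (((m + l - 1).choose (l - 1) : ℕ) : ℝ))
        - ∑ j ∈ Finset.range l,
            (-1 : ℝ) ^ j * ((l - 1).choose j : ℝ) * gH 1 (m + j) / ((m : ℝ) + j) ^ 2 := by
  obtain ⟨L, rfl⟩ : ∃ L, l = L + 1 := ⟨l - 1, by omega⟩
  obtain ⟨M, rfl⟩ : ∃ M, m = M + 1 := ⟨m - 1, by omega⟩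
  have hsub1 : M + 1 + (L + 1) - 1 = M + 1 + L := by omega
  have hsub2 : L + 1 - 1 = L := by omega
  rw [hsub1, hsub2]
  have hts : Summable (fun n : ℕ => gH 2 (n+1) * bF M L n) := by
    apply summable_of_sq_bound _ (3 * Nat.factorial (L+1))
    · intro n; exact mul_nonneg (gH2_nonneg _) (bF_nonneg M L n)
    · intro n
      calc gH 2 (n+1) * bF M L n ≤ 3 * bF M L n :=
            mul_le_mul_of_nonneg_right (gH2_le _) (bF_nonneg M L n)
        _ ≤ 3 * ((Nat.factorial (L+1) : ℝ)/((n:ℝ)+1)^2) := by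
            have := bF_le M L n; linarith
        _ = (3 * Nat.factorial (L+1)) / ((n:ℝ)+1)^2 := by ring
  have hus : Summable (fun n : ℕ => cF M L n / ((n:ℝ)+1)^2) := by
    apply summable_of_sq_bound _ (Nat.factorial L)
    · intro n; exact div_nonneg (cF_nonneg M L n) (by positivity)
    · intro n
      rw [div_eq_mul_one_div, div_eq_mul_one_div ((Nat.factorial L : ℝ))]
      exact mul_le_mul_of_nonneg_right (cF_le_fact M L n) (by positivity)
  have habel : ∀ n : ℕ, gH 2 (n+1) * bF M L n - cF M L n / ((n:ℝ)+1)^2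
      = gH 2 n * cF M L n - gH 2 (n+1) * cF M L (n+1) := by
    intro n
    rw [← cF_sub M L n, gH2_succ n]
    ring
  have hgt : Tendsto (fun n : ℕ => gH 2 n * cF M L n) atTop (nhds 0) := by
    have hb : ∀ n : ℕ, gH 2 n * cF M L n ≤ (3 * (Nat.factorial L : ℝ)) * (1/((n:ℝ)+1)) := by
      intro n
      calc gH 2 n * cF M L n ≤ 3 * cF M L n :=
            mul_le_mul_of_nonneg_right (gH2_le _) (cF_nonneg M L n)
        _ ≤ 3 * ((Nat.factorial L : ℝ)/((n:ℝ)+1)) := by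
            have h := cF_le M L n
            linarith
        _ = (3 * (Nat.factorial L : ℝ)) * (1/((n:ℝ)+1)) := by ring
    have ht2 := tendsto_one_div_add_atTop_nhds_zero_nat.const_mul (3 * (Nat.factorial L : ℝ))
    rw [mul_zero] at ht2
    exact squeeze_zero (fun n => mul_nonneg (gH2_nonneg _) (cF_nonneg M L n)) hb ht2
  have hg0 : gH 2 0 * cF M L 0 = 0 := by simp [gH]
  have hgsum : Summable (fun n : ℕ =>
      (fun k : ℕ => gH 2 k * cF M L k) n - (fun k : ℕ => gH 2 k * cF M L k) (n+1)) :=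
    (hts.sub hus).congr habel
  have e2 : ∑' n : ℕ, gH 2 (n+1) * bF M L n = ∑' n : ℕ, cF M L n / ((n:ℝ)+1)^2 := by
    have h1 : ∑' n : ℕ, (gH 2 (n+1) * bF M L n - cF M L n / ((n:ℝ)+1)^2) = 0 := by
      rw [tsum_congr habel]
      have h := telescope_tsum (fun k : ℕ => gH 2 k * cF M L k) hgt hgsum
      exact h.trans hg0
    rw [Summable.tsum_sub hts hus] at h1
    linarith
  have hueq : ∀ n : ℕ, cF M L n / ((n:ℝ)+1)^2
      = ∑ j ∈ range (L+1), ((-1:ℝ)^j * ((L.choose j : ℕ):ℝ)) *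
          (1/(((n:ℝ)+1)^2*((n:ℝ)+1+((M+1+j:ℕ):ℝ)))) := by
    intro n
    unfold cF
    rw [← pf_lemma L ((n:ℝ)+M+2) (by positivity), Finset.sum_div]
    refine Finset.sum_congr rfl fun j hj => ?_
    push_cast
    rw [div_div, mul_one_div]
    congr 1
    ring
  have e3 : ∑' n : ℕ, cF M L n / ((n:ℝ)+1)^2
      = ∑ j ∈ range (L+1), ((-1:ℝ)^j * ((L.choose j : ℕ):ℝ)) *
          ((Real.pi^2/6)/((M+1+j:ℕ):ℝ) - gH 1 (M+1+j)/((M+1+j:ℕ):ℝ)^2) := by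
    rw [tsum_congr hueq, Summable.tsum_finsetSum (fun j _ => (summable_mu2a (M+1+j)).mul_left _)]
    refine Finset.sum_congr rfl fun j _ => ?_
    rw [tsum_mul_left, mu2_eq (M+1+j) (by omega)]
  have hstep1 : (∑' n : ℕ+, gH 2 (n : ℕ) /
        ((((n : ℕ) : ℝ) + ((M+1 : ℕ) : ℝ)) * ((((n : ℕ) + (M+1) + (L+1)).choose (L+1) : ℕ) : ℝ)))
      = ∑' n : ℕ, gH 2 (n+1) * bF M L n := by
    rw [← Equiv.pnatEquivNat.symm.tsum_eq]
    refine tsum_congr fun n => ?_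
    simp only [Equiv.pnatEquivNat_symm_apply]
    have hco : ((n.succPNat : ℕ+) : ℕ) = n + 1 := rfl
    rw [hco]
    have harg : n + 1 + (M+1) + (L+1) = (n+M+1) + 1 + (L+1) := by omega
    rw [harg]
    have hcp := choose_prod_real (n+M+1) (L+1)
    have hprod : ∏ i ∈ range (L+2), ((((n+M+1):ℕ):ℝ) + 1 + i)
        = ∏ i ∈ range (L+2), ((n:ℝ) + M + 2 + i) :=
      Finset.prod_congr rfl fun i _ => by push_cast; ring
    rw [hprod] at hcp
    have hden : ((((n+1):ℕ):ℝ) + ((M+1 : ℕ):ℝ)) * ((((n+M+1) + 1 + (L+1)).choose (L+1) : ℕ) : ℝ)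
        = (∏ i ∈ range (L+2), ((n:ℝ) + M + 2 + i)) / (Nat.factorial (L+1) : ℝ) := by
      rw [eq_div_iff (by positivity : (Nat.factorial (L+1) : ℝ) ≠ 0), ← hcp]
      push_cast
      ring
    rw [hden, div_div_eq_mul_div, mul_div_assoc]
    rfl
  rw [hstep1, e2, e3]
  have hsplit : ∀ j ∈ range (L+1), ((-1:ℝ)^j * ((L.choose j : ℕ):ℝ)) *
      ((Real.pi^2/6)/((M+1+j:ℕ):ℝ) - gH 1 (M+1+j)/((M+1+j:ℕ):ℝ)^2)
      = (Real.pi^2/6) * ((-1:ℝ)^j * ((L.choose j : ℕ):ℝ)/(((M:ℝ)+1)+(j:ℝ)))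
        - (-1:ℝ)^j * ((L.choose j : ℕ):ℝ) * gH 1 (M+1+j) / (((M+1:ℕ):ℝ)+(j:ℝ))^2 := by
    intro j _
    push_cast
    ring
  rw [Finset.sum_congr rfl hsplit, Finset.sum_sub_distrib, ← Finset.mul_sum]
  congr 1
  rw [pf_lemma L ((M:ℝ)+1) (by positivity), ← choose_prod_real M L]
  have hC : (0:ℝ) < (((M+1+L).choose L : ℕ):ℝ) := by
    exact_mod_cast Nat.choose_pos (Nat.le_add_left L (M+1))
  have hF : (0:ℝ) < (Nat.factorial L : ℝ) := by exact_mod_cast Nat.factorial_pos L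
  push_cast
  field_simp
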